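/- (Variance bound from the margin condition.) For every ν ∈ (0,∞), κ > 0 and finite action set 𝒜 there exists a constant C > 0 depending only on ν, κ and |𝒜| such that the following holds. In the policy-learning setting, let μ(x,a) = ∫ y K((x,a), dy), μ*(x) = min_{a∈𝒜} μ(x,a), and let a* : 𝒳 → 𝒜 be a measurable selection with μ(x, a*(x)) = μ*(x). Suppose the margin assumption holds with parameters ν and κ, and suppose the realizability condition min_{f∈𝓕} R*(f) = ∫ μ*(x) dμ_X(x) holds, attained at some f_1 ∈ 𝓕. Then for every f ∈ 𝓕: ‖ℓ(f,·) − ℓ(f_1,·)‖_{2,g*} ≤ C · M · ( (R*(f) − R*(f_1)) / M )^{ν / (2(ν+1))}, i.e., the variance bound holds with exponent α = ν/(ν+1) and envelope equal to the constant M. -/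

import Mathlib

open MeasureTheory Finset ProbabilityTheory

lemma pstar_integral_eq
    {𝒳 : Type} [m𝒳 : MeasurableSpace 𝒳] {𝒜 : Type} [m𝒜 : MeasurableSpace 𝒜] [Fintype 𝒜]
    (μX : Measure 𝒳) [IsProbabilityMeasure μX]
    (K : Kernel (𝒳 × 𝒜) ℝ) [IsMarkovKernel K]
    {M : ℝ} (hK : ∀ x a, ∀ᵐ y ∂(K (x, a)), |y| ≤ M)
    (Pstar : Measure (𝒳 × 𝒜 × ℝ))
    (hP : ∀ s : Set (𝒳 × 𝒜 × ℝ), MeasurableSet s →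
        Pstar s = ∫⁻ x, ∑ a : 𝒜, K (x, a) {y | (x, a, y) ∈ s} ∂μX)
    (H : 𝒳 × 𝒜 × ℝ → ℝ) (hH : Measurable H) {B : ℝ}
    (hHB : ∀ x a y, |y| ≤ M → |H (x, a, y)| ≤ B) :
    ∫ o, H o ∂Pstar = ∫ x, ∑ a : 𝒜, ∫ y, H (x, a, y) ∂(K (x, a)) ∂μX := by
  classical
  -- the per-action kernels
  set Ka : 𝒜 → Kernel 𝒳 ℝ := fun a => K.comap (fun x => (x, a))
    (measurable_id.prodMk measurable_const) with hKa
  have hKaapp : ∀ a x, Ka a x = K (x, a) := fun a x => Kernel.comap_apply _ _ _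
  have hemb : ∀ a : 𝒜, Measurable (fun p : 𝒳 × ℝ => (p.1, a, p.2)) :=
    fun a => measurable_fst.prodMk (measurable_const.prodMk measurable_snd)
  -- Pstar is the sum of the mapped comp-products
  have hPsum : Pstar = ∑ a : 𝒜,
      (μX ⊗ₘ (Ka a)).map (fun p : 𝒳 × ℝ => (p.1, a, p.2)) := by
    ext s hs
    have hmeas : ∀ a : 𝒜, Measurable fun x => K (x, a) {y | (x, a, y) ∈ s} := by
      intro a
      have : (fun x => K (x, a) {y | (x, a, y) ∈ s})
          = fun x => (Ka a) x (Prod.mk x ⁻¹' ((fun p : 𝒳 × ℝ => (p.1, a, p.2)) ⁻¹' s)) := by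
        funext x; rw [hKaapp]; rfl
      rw [this]
      exact Kernel.measurable_kernel_prodMk_left ((hemb a) hs)
    have happ : ∀ a : 𝒜, (Measure.map (fun p : 𝒳 × ℝ => (p.1, a, p.2)) (μX ⊗ₘ Ka a)) s
        = ∫⁻ x, K (x, a) {y | (x, a, y) ∈ s} ∂μX := by
      intro a
      rw [Measure.map_apply (hemb a) hs, Measure.compProd_apply ((hemb a) hs)]
      refine lintegral_congr fun x => ?_
      rw [hKaapp]; rfl
    rw [hP s hs, Measure.finset_sum_apply, Finset.sum_congr rfl (fun a _ => happ a),
      ← lintegral_finset_sum _ (fun a _ => hmeas a)]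
  have haebound : ∀ a : 𝒜, ∀ᵐ p : 𝒳 × ℝ ∂(μX ⊗ₘ Ka a), |p.2| ≤ M := by
    intro a
    have hms : MeasurableSet {p : 𝒳 × ℝ | ¬ |p.2| ≤ M} := by
      simpa [not_le] using measurableSet_lt measurable_const measurable_snd.abs
    rw [ae_iff, Measure.compProd_apply hms]
    have : ∀ x : 𝒳, (Ka a) x (Prod.mk x ⁻¹' {p : 𝒳 × ℝ | ¬ |p.2| ≤ M}) = 0 := by
      intro x
      rw [hKaapp]
      exact (hK x a)
    simp only [this, lintegral_zero]
  have hintH : ∀ a : 𝒜, Integrable (fun p : 𝒳 × ℝ => H (p.1, a, p.2)) (μX ⊗ₘ Ka a) := by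
    intro a
    refine Integrable.mono' (integrable_const B) (hH.comp (hemb a)).aestronglyMeasurable ?_
    filter_upwards [haebound a] with p hp
    simpa [Real.norm_eq_abs] using hHB p.1 a p.2 hp
  have hinner_meas : ∀ a : 𝒜, Measurable fun x => ∫ y, H (x, a, y) ∂(K (x, a)) := by
    intro a
    have h1 : StronglyMeasurable fun q : 𝒳 × ℝ => H (q.1, a, q.2) :=
      (hH.comp (hemb a)).stronglyMeasurable
    have := h1.integral_kernel_prod_right' (κ := Ka a)
    have heq : (fun x => ∫ y, H (x, a, y) ∂((Ka a) x))
        = fun x => ∫ y, H (x, a, y) ∂(K (x, a)) := by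
      funext x; rw [hKaapp]
    rw [heq] at this
    exact this.measurable
  have hinner_bdd : ∀ a : 𝒜, ∀ x : 𝒳, |∫ y, H (x, a, y) ∂(K (x, a))| ≤ B := by
    intro a x
    have h := norm_integral_le_of_norm_le_const (μ := K (x, a))
      (f := fun y => H (x, a, y)) (C := B) ?_
    · simpa [Real.norm_eq_abs, measure_univ] using h
    · filter_upwards [hK x a] with y hy
      simpa [Real.norm_eq_abs] using hHB x a y hy
  calc ∫ o, H o ∂Pstar
      = ∑ a : 𝒜, ∫ o, H o ∂((μX ⊗ₘ Ka a).map (fun p : 𝒳 × ℝ => (p.1, a, p.2))) := by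
        rw [hPsum]
        refine integral_finset_sum_measure fun a _ => ?_
        exact (integrable_map_measure hH.aestronglyMeasurable (hemb a).aemeasurable).mpr
          (hintH a)
    _ = ∑ a : 𝒜, ∫ p : 𝒳 × ℝ, H (p.1, a, p.2) ∂(μX ⊗ₘ Ka a) := by
        refine Finset.sum_congr rfl fun a _ => ?_
        exact integral_map (hemb a).aemeasurable hH.aestronglyMeasurable
    _ = ∑ a : 𝒜, ∫ x, ∫ y, H (x, a, y) ∂((Ka a) x) ∂μX := by
        refine Finset.sum_congr rfl fun a _ => ?_
        exact Measure.integral_compProd (hintH a)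
    _ = ∑ a : 𝒜, ∫ x, ∫ y, H (x, a, y) ∂(K (x, a)) ∂μX := by
        refine Finset.sum_congr rfl fun a _ => ?_
        refine integral_congr_ae (Filter.Eventually.of_forall fun x => ?_)
        simp only [hKaapp]
    _ = ∫ x, ∑ a : 𝒜, ∫ y, H (x, a, y) ∂(K (x, a)) ∂μX := by
        refine (integral_finset_sum _ fun a _ => ?_).symm
        refine Integrable.mono' (integrable_const B)
          (hinner_meas a).aestronglyMeasurable ?_
        exact Filter.Eventually.of_forall fun x => by
          simpa [Real.norm_eq_abs] using hinner_bdd a x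

/-- **Variance bound from the margin condition.**

For every `ν ∈ (0,∞)`, `κ > 0` and cardinality `cardA` of the finite action set there is
a constant `C > 0` depending only on `ν`, `κ`, `cardA` such that, in the policy-learning
setting, under the margin assumption with parameters `ν, κ` and the realizability
condition `min_{f∈𝓕} R*(f) = ∫ μ* dμ_X` (attained at `f₁ ∈ 𝓕`), we have for all `f ∈ 𝓕`:
`‖ℓ(f,·) − ℓ(f₁,·)‖_{2,g*} ≤ C M ((R*(f) − R*(f₁))/M)^{ν/(2(ν+1))}`. -/
theorem variance_bound_from_margin (ν κ : ℝ) (cardA : ℕ) (hν : 0 < ν) (hκ : 0 < κ) :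
    ∃ C : ℝ, 0 < C ∧
    ∀ (𝒳 : Type) [m𝒳 : MeasurableSpace 𝒳]
      (𝒜 : Type) [m𝒜 : MeasurableSpace 𝒜] [inst𝒜 : Fintype 𝒜],
      Fintype.card 𝒜 = cardA →
    ∀ (M : ℝ), 0 < M →
    -- the context distribution and the outcome kernel, with outcomes in [−M, M]
    ∀ (μX : Measure 𝒳) [IsProbabilityMeasure μX]
      (K : Kernel (𝒳 × 𝒜) ℝ) [IsMarkovKernel K],
      (∀ x a, ∀ᵐ y ∂(K (x, a)), |y| ≤ M) →
    -- the reference measure P* (corresponding to g* ≡ 1)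
    ∀ Pstar : Measure (𝒳 × 𝒜 × ℝ),
      (∀ s : Set (𝒳 × 𝒜 × ℝ), MeasurableSet s →
        Pstar s = ∫⁻ x, ∑ a : 𝒜, K (x, a) {y | (x, a, y) ∈ s} ∂μX) →
    -- the mean-outcome function μ and the optimal-action selection a*
    ∀ μp : 𝒳 × 𝒜 → ℝ, (∀ z : 𝒳 × 𝒜, μp z = ∫ y, y ∂(K z)) →
    ∀ astar : 𝒳 → 𝒜, Measurable astar →
      -- μ(x, a*(x)) = μ*(x) = min_a μ(x,a)
      (∀ x a, μp (x, astar x) ≤ μp (x, a)) →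
    -- the margin assumption with parameters ν, κ
    (∀ u : ℝ, 0 ≤ u →
      μX {x | ∃ a, a ≠ astar x ∧ μp (x, a) - μp (x, astar x) ≤ M * u}
        ≤ ENNReal.ofReal ((κ * u) ^ ν)) →
    -- the policy class
    ∀ F : Set (𝒳 × 𝒜 → ℝ),
      (∀ f ∈ F, Measurable f) →
      (∀ f ∈ F, ∀ z : 𝒳 × 𝒜, f z ∈ Set.Icc (0 : ℝ) 1) →
      (∀ f ∈ F, ∀ x : 𝒳, ∑ a : 𝒜, f (x, a) = 1) →
    -- realizability: min_{f∈𝓕} R*(f) = ∫ μ*(x) dμ_X(x), attained at f₁ ∈ 𝓕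
    ∀ f1 ∈ F,
      ((∫ o : 𝒳 × 𝒜 × ℝ, o.2.2 * f1 (o.1, o.2.1) ∂Pstar) = ∫ x, μp (x, astar x) ∂μX) →
      (∀ f ∈ F,
        (∫ o : 𝒳 × 𝒜 × ℝ, o.2.2 * f1 (o.1, o.2.1) ∂Pstar)
          ≤ ∫ o : 𝒳 × 𝒜 × ℝ, o.2.2 * f (o.1, o.2.1) ∂Pstar) →
    -- conclusion: the variance bound with exponent α = ν/(ν+1) and envelope M
    ∀ f ∈ F,
      Real.sqrt (∫ o : 𝒳 × 𝒜 × ℝ,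
          (o.2.2 * f (o.1, o.2.1) - o.2.2 * f1 (o.1, o.2.1)) ^ 2 ∂Pstar)
        ≤ C * M *
          ((((∫ o : 𝒳 × 𝒜 × ℝ, o.2.2 * f (o.1, o.2.1) ∂Pstar)
              - ∫ o : 𝒳 × 𝒜 × ℝ, o.2.2 * f1 (o.1, o.2.1) ∂Pstar) / M)
            ^ (ν / (2 * (ν + 1)))) := by
  classical
  have hν1 : (0:ℝ) < ν + 1 := by linarith
  refine ⟨2 * κ ^ (ν / (2 * (ν + 1))),
    mul_pos two_pos (Real.rpow_pos_of_pos hκ _), ?_⟩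
  intro 𝒳 m𝒳 𝒜 m𝒜 inst𝒜 hcard M hM μX instμX K instK hK Pstar hP μp hμp astar hastar hopt
    hmargin F hFmeas hFbd hFsum f1 hf1F hreal hmin f hfF
  -- basic measurability and bounds
  have hfm : Measurable f := hFmeas f hfF
  have hf1m : Measurable f1 := hFmeas f1 hf1F
  have hf01 : ∀ z, 0 ≤ f z ∧ f z ≤ 1 := fun z => ⟨(hFbd f hfF z).1, (hFbd f hfF z).2⟩
  have hf101 : ∀ z, 0 ≤ f1 z ∧ f1 z ≤ 1 := fun z => ⟨(hFbd f1 hf1F z).1, (hFbd f1 hf1F z).2⟩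
  have hμpm : Measurable μp := by
    have h2 := (measurable_snd.stronglyMeasurable
      (f := fun q : (𝒳 × 𝒜) × ℝ => q.2)).integral_kernel_prod_right' (κ := K)
    have heq : μp = fun z => ∫ y, y ∂(K z) := funext hμp
    rw [heq]; exact h2.measurable
  have hμple : ∀ z, |μp z| ≤ M := by
    intro z
    rw [hμp z]
    have h := norm_integral_le_of_norm_le_const (μ := K z) (f := fun y : ℝ => y) (C := M) ?_
    · simpa [Real.norm_eq_abs, measure_univ] using h
    · obtain ⟨x, a⟩ := z
      filter_upwards [hK x a] with y hy using by simpa [Real.norm_eq_abs] using hy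
  -- the second-moment function
  set V2 : 𝒳 × 𝒜 → ℝ := fun z => ∫ y, y ^ 2 ∂(K z) with hV2def
  have hV2m : Measurable V2 := by
    have h2 := ((measurable_snd.pow_const 2).stronglyMeasurable
      (f := fun q : (𝒳 × 𝒜) × ℝ => q.2 ^ 2)).integral_kernel_prod_right' (κ := K)
    exact h2.measurable
  have hV2nonneg : ∀ z, 0 ≤ V2 z := fun z => integral_nonneg fun y => sq_nonneg y
  have hV2le : ∀ z, V2 z ≤ M ^ 2 := by
    intro z
    have hint : Integrable (fun y : ℝ => y ^ 2) (K z) := by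
      refine Integrable.mono' (integrable_const (M ^ 2))
        ((measurable_id.pow_const 2).aestronglyMeasurable) ?_
      obtain ⟨x, a⟩ := z
      filter_upwards [hK x a] with y hy
      have : |y| ^ 2 ≤ M ^ 2 := pow_le_pow_left₀ (abs_nonneg y) hy 2
      simpa [Real.norm_eq_abs, abs_pow, sq_abs] using this
    calc V2 z ≤ ∫ _ : ℝ, M ^ 2 ∂(K z) := by
          refine integral_mono_ae hint (integrable_const _) ?_
          obtain ⟨x, a⟩ := z
          filter_upwards [hK x a] with y hy
          calc y ^ 2 = |y| ^ 2 := (sq_abs y).symm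
            _ ≤ M ^ 2 := pow_le_pow_left₀ (abs_nonneg y) hy 2
      _ = M ^ 2 := by simp [measure_univ]
  -- integrability helper
  have hbdd_int : ∀ (g : 𝒳 → ℝ) (c : ℝ), Measurable g → (∀ x, |g x| ≤ c) →
      Integrable g μX := fun g c hg hgc =>
    Integrable.mono' (integrable_const c) hg.aestronglyMeasurable
      (Filter.Eventually.of_forall fun x => by simpa [Real.norm_eq_abs] using hgc x)
  -- risk identities
  have hRisk : ∀ g : 𝒳 × 𝒜 → ℝ, g ∈ F →
      (∫ o : 𝒳 × 𝒜 × ℝ, o.2.2 * g (o.1, o.2.1) ∂Pstar)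
        = ∫ x, ∑ a : 𝒜, μp (x, a) * g (x, a) ∂μX := by
    intro g hgF
    have hgm : Measurable g := hFmeas g hgF
    have h := pstar_integral_eq μX K hK Pstar hP
      (fun o : 𝒳 × 𝒜 × ℝ => o.2.2 * g (o.1, o.2.1))
      (measurable_snd.snd.mul (hgm.comp (measurable_fst.prodMk measurable_snd.fst)))
      (B := M) ?_
    · rw [h]
      refine integral_congr_ae (Filter.Eventually.of_forall fun x => ?_)
      refine Finset.sum_congr rfl fun a _ => ?_
      show ∫ y : ℝ, y * g (x, a) ∂(K (x, a)) = μp (x, a) * g (x, a)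
      rw [integral_mul_const, hμp]
    · intro x a y hy
      have h1 : |y * g (x, a)| = |y| * |g (x, a)| := abs_mul _ _
      have h2 : |g (x, a)| ≤ 1 := by
        rw [abs_le]; exact ⟨by linarith [(hFbd g hgF (x, a)).1], (hFbd g hgF (x, a)).2⟩
      calc |y * g (x, a)| = |y| * |g (x, a)| := h1
        _ ≤ M * 1 := mul_le_mul hy h2 (abs_nonneg _) (by linarith [abs_nonneg y])
        _ = M := mul_one M
  -- variance identity
  have hVar : (∫ o : 𝒳 × 𝒜 × ℝ,
        (o.2.2 * f (o.1, o.2.1) - o.2.2 * f1 (o.1, o.2.1)) ^ 2 ∂Pstar)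
      = ∫ x, ∑ a : 𝒜, (f (x, a) - f1 (x, a)) ^ 2 * V2 (x, a) ∂μX := by
    have h := pstar_integral_eq μX K hK Pstar hP
      (fun o : 𝒳 × 𝒜 × ℝ => (o.2.2 * f (o.1, o.2.1) - o.2.2 * f1 (o.1, o.2.1)) ^ 2)
      (((measurable_snd.snd.mul (hfm.comp (measurable_fst.prodMk measurable_snd.fst))).sub
        (measurable_snd.snd.mul (hf1m.comp (measurable_fst.prodMk measurable_snd.fst)))).pow_const 2)
      (B := M ^ 2) ?_
    · rw [h]
      refine integral_congr_ae (Filter.Eventually.of_forall fun x => ?_)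
      refine Finset.sum_congr rfl fun a _ => ?_
      have heq : (fun y : ℝ => (y * f (x, a) - y * f1 (x, a)) ^ 2)
          = fun y : ℝ => (f (x, a) - f1 (x, a)) ^ 2 * y ^ 2 := funext fun y => by ring
      show ∫ y : ℝ, (y * f (x, a) - y * f1 (x, a)) ^ 2 ∂(K (x, a))
          = (f (x, a) - f1 (x, a)) ^ 2 * V2 (x, a)
      rw [heq, integral_const_mul]
    · intro x a y hy
      have h2 : |f (x, a) - f1 (x, a)| ≤ 1 := by
        rw [abs_le]
        constructor
        · linarith [(hf01 (x, a)).1, (hf101 (x, a)).2]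
        · linarith [(hf01 (x, a)).2, (hf101 (x, a)).1]
      show |(y * f (x, a) - y * f1 (x, a)) ^ 2| ≤ M ^ 2
      have : (y * f (x, a) - y * f1 (x, a)) ^ 2 = (|y| * |f (x, a) - f1 (x, a)|) ^ 2 := by
        rw [← abs_mul]
        rw [sq_abs]
        ring_nf
      rw [abs_of_nonneg (sq_nonneg _), this]
      calc (|y| * |f (x, a) - f1 (x, a)|) ^ 2 ≤ (M * 1) ^ 2 := by
            refine pow_le_pow_left₀ (mul_nonneg (abs_nonneg _) (abs_nonneg _)) ?_ 2
            exact mul_le_mul hy h2 (abs_nonneg _) (by linarith [abs_nonneg y])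
        _ = M ^ 2 := by ring
  -- integrability of the excess-gap sums
  have hsum_int : ∀ g : 𝒳 × 𝒜 → ℝ, g ∈ F → Integrable
      (fun x => ∑ a : 𝒜, (μp (x, a) - μp (x, astar x)) * g (x, a)) μX := by
    intro g hgF
    have hgm := hFmeas g hgF
    refine hbdd_int _ ((Fintype.card 𝒜 : ℝ) * (2 * M)) ?_ ?_
    · refine Finset.measurable_sum _ fun a _ => Measurable.mul ?_ ?_
      · exact (hμpm.comp (measurable_id.prodMk measurable_const)).sub
          (hμpm.comp (measurable_id.prodMk hastar))
      · exact hgm.comp (measurable_id.prodMk measurable_const)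
    · intro x
      calc |∑ a : 𝒜, (μp (x, a) - μp (x, astar x)) * g (x, a)|
          ≤ ∑ a : 𝒜, |(μp (x, a) - μp (x, astar x)) * g (x, a)| :=
            Finset.abs_sum_le_sum_abs _ _
        _ ≤ ∑ _a : 𝒜, (2 * M) := by
            refine Finset.sum_le_sum fun a _ => ?_
            rw [abs_mul]
            have h1 : |μp (x, a) - μp (x, astar x)| ≤ 2 * M := by
              calc |μp (x, a) - μp (x, astar x)| ≤ |μp (x, a)| + |μp (x, astar x)| :=
                    abs_sub _ _
                _ ≤ 2 * M := by linarith [hμple (x, a), hμple (x, astar x)]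
            have h2 : |g (x, a)| ≤ 1 := by
              rw [abs_le]
              exact ⟨by linarith [(hFbd g hgF (x, a)).1], (hFbd g hgF (x, a)).2⟩
            calc |μp (x, a) - μp (x, astar x)| * |g (x, a)| ≤ (2 * M) * 1 :=
                  mul_le_mul h1 h2 (abs_nonneg _) (by linarith)
              _ = 2 * M := mul_one _
        _ = (Fintype.card 𝒜 : ℝ) * (2 * M) := by
            rw [Finset.sum_const, Finset.card_univ, nsmul_eq_mul]
  -- excess risk representation
  have hexcess : ∀ g : 𝒳 × 𝒜 → ℝ, g ∈ F →
      (∫ o : 𝒳 × 𝒜 × ℝ, o.2.2 * g (o.1, o.2.1) ∂Pstar) - (∫ x, μp (x, astar x) ∂μX)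
        = ∫ x, ∑ a : 𝒜, (μp (x, a) - μp (x, astar x)) * g (x, a) ∂μX := by
    intro g hgF
    have hint1 : Integrable (fun x => ∑ a : 𝒜, μp (x, a) * g (x, a)) μX := by
      refine hbdd_int _ ((Fintype.card 𝒜 : ℝ) * M) ?_ ?_
      · refine Finset.measurable_sum _ fun a _ => Measurable.mul ?_ ?_
        · exact hμpm.comp (measurable_id.prodMk measurable_const)
        · exact (hFmeas g hgF).comp (measurable_id.prodMk measurable_const)
      · intro x
        calc |∑ a : 𝒜, μp (x, a) * g (x, a)| ≤ ∑ a : 𝒜, |μp (x, a) * g (x, a)| :=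
              Finset.abs_sum_le_sum_abs _ _
          _ ≤ ∑ _a : 𝒜, M := by
              refine Finset.sum_le_sum fun a _ => ?_
              rw [abs_mul]
              have h2 : |g (x, a)| ≤ 1 := by
                rw [abs_le]
                exact ⟨by linarith [(hFbd g hgF (x, a)).1], (hFbd g hgF (x, a)).2⟩
              calc |μp (x, a)| * |g (x, a)| ≤ M * 1 :=
                    mul_le_mul (hμple (x, a)) h2 (abs_nonneg _) hM.le
                _ = M := mul_one _
          _ = (Fintype.card 𝒜 : ℝ) * M := by
              rw [Finset.sum_const, Finset.card_univ, nsmul_eq_mul]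
    have hint2 : Integrable (fun x => μp (x, astar x)) μX :=
      hbdd_int _ M (hμpm.comp (measurable_id.prodMk hastar)) fun x => hμple (x, astar x)
    rw [hRisk g hgF, ← integral_sub hint1 hint2]
    refine integral_congr_ae (Filter.Eventually.of_forall fun x => ?_)
    have hs := hFsum g hgF x
    calc (∑ a : 𝒜, μp (x, a) * g (x, a)) - μp (x, astar x)
        = (∑ a : 𝒜, μp (x, a) * g (x, a)) - μp (x, astar x) * ∑ a : 𝒜, g (x, a) := by
          rw [hs, mul_one]
      _ = ∑ a : 𝒜, (μp (x, a) * g (x, a) - μp (x, astar x) * g (x, a)) := by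
          rw [Finset.mul_sum, ← Finset.sum_sub_distrib]
      _ = ∑ a : 𝒜, (μp (x, a) - μp (x, astar x)) * g (x, a) :=
          Finset.sum_congr rfl fun a _ => by ring
  -- the realizability forces f1 to select astar a.e.
  have hG1zero : ∫ x, ∑ a : 𝒜, (μp (x, a) - μp (x, astar x)) * f1 (x, a) ∂μX = 0 := by
    rw [← hexcess f1 hf1F, hreal, sub_self]
  have hG1ae : ∀ᵐ x ∂μX, (∑ a : 𝒜, (μp (x, a) - μp (x, astar x)) * f1 (x, a)) = 0 := by
    have h := (integral_eq_zero_iff_of_nonneg ?_ (hsum_int f1 hf1F)).mp hG1zero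
    · filter_upwards [h] with x hx using hx
    · intro x
      exact Finset.sum_nonneg fun a _ =>
        mul_nonneg (sub_nonneg.mpr (hopt x a)) (hFbd f1 hf1F (x, a)).1
  have hties : μX {x | ∃ a, a ≠ astar x ∧ μp (x, a) - μp (x, astar x) ≤ 0} = 0 := by
    refine le_antisymm ?_ zero_le
    refine ENNReal.le_of_forall_pos_le_add fun ε hε _ => ?_
    rw [zero_add]
    have hεpos : (0 : ℝ) < ε := hε
    set u : ℝ := ((ε : ℝ)) ^ (ν⁻¹) / κ with hudef
    have hupos : 0 < u := div_pos (Real.rpow_pos_of_pos hεpos _) hκ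
    have hsub : {x | ∃ a, a ≠ astar x ∧ μp (x, a) - μp (x, astar x) ≤ 0}
        ⊆ {x | ∃ a, a ≠ astar x ∧ μp (x, a) - μp (x, astar x) ≤ M * u} := by
      rintro x ⟨a, ha, hle⟩
      exact ⟨a, ha, hle.trans (by positivity)⟩
    refine (measure_mono hsub).trans ((hmargin u hupos.le).trans ?_)
    have hκu : κ * u = (ε : ℝ) ^ (ν⁻¹) := by
      rw [hudef]; field_simp
    rw [hκu, Real.rpow_inv_rpow hεpos.le (ne_of_gt hν)]
    exact le_of_eq ENNReal.ofReal_coe_nnreal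
  have hgood : ∀ᵐ x ∂μX, (∀ a, a ≠ astar x → 0 < μp (x, a) - μp (x, astar x)) ∧
      f1 (x, astar x) = 1 ∧ ∀ a, a ≠ astar x → f1 (x, a) = 0 := by
    have hnm : ∀ᵐ x ∂μX,
        x ∉ {x | ∃ a, a ≠ astar x ∧ μp (x, a) - μp (x, astar x) ≤ 0} :=
      measure_eq_zero_iff_ae_notMem.mp hties
    filter_upwards [hG1ae, hnm] with x hx1 hx2
    have hgap : ∀ a, a ≠ astar x → 0 < μp (x, a) - μp (x, astar x) := by
      intro a ha
      by_contra h
      exact hx2 ⟨a, ha, not_lt.mp h⟩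
    have hzero : ∀ a, a ≠ astar x → f1 (x, a) = 0 := by
      intro a ha
      have hterms := (Finset.sum_eq_zero_iff_of_nonneg
        (fun a _ => mul_nonneg (sub_nonneg.mpr (hopt x a)) (hFbd f1 hf1F (x, a)).1)).mp
        hx1 a (Finset.mem_univ a)
      rcases mul_eq_zero.mp hterms with h | h
      · exact absurd h (ne_of_gt (hgap a ha))
      · exact h
    refine ⟨hgap, ?_, hzero⟩
    have hs := hFsum f1 hf1F x
    rw [← Finset.add_sum_erase Finset.univ _ (Finset.mem_univ (astar x))] at hs
    have hrest : ∑ a ∈ Finset.univ.erase (astar x), f1 (x, a) = 0 :=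
      Finset.sum_eq_zero fun a ha => hzero a (Finset.ne_of_mem_erase ha)
    rw [hrest, add_zero] at hs
    exact hs
  -- integrability of the variance integrand over μX
  have hIint : Integrable (fun x => ∑ a : 𝒜, (f (x, a) - f1 (x, a)) ^ 2 * V2 (x, a)) μX := by
    refine hbdd_int _ ((Fintype.card 𝒜 : ℝ) * M ^ 2) ?_ ?_
    · refine Finset.measurable_sum _ fun a _ => Measurable.mul ?_ ?_
      · exact ((hfm.comp (measurable_id.prodMk measurable_const)).sub
          (hf1m.comp (measurable_id.prodMk measurable_const))).pow_const 2
      · exact hV2m.comp (measurable_id.prodMk measurable_const)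
    · intro x
      calc |∑ a : 𝒜, (f (x, a) - f1 (x, a)) ^ 2 * V2 (x, a)|
          ≤ ∑ a : 𝒜, |(f (x, a) - f1 (x, a)) ^ 2 * V2 (x, a)| :=
            Finset.abs_sum_le_sum_abs _ _
        _ ≤ ∑ _a : 𝒜, M ^ 2 := by
            refine Finset.sum_le_sum fun a _ => ?_
            rw [abs_mul, abs_of_nonneg (sq_nonneg _), abs_of_nonneg (hV2nonneg (x, a))]
            have h2 : (f (x, a) - f1 (x, a)) ^ 2 ≤ 1 := by
              rw [← sq_abs]
              refine pow_le_one₀ (abs_nonneg _) ?_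
              rw [abs_le]
              constructor
              · linarith [(hf01 (x, a)).1, (hf101 (x, a)).2]
              · linarith [(hf01 (x, a)).2, (hf101 (x, a)).1]
            calc (f (x, a) - f1 (x, a)) ^ 2 * V2 (x, a) ≤ 1 * M ^ 2 :=
                  mul_le_mul h2 (hV2le (x, a)) (hV2nonneg (x, a)) one_pos.le
              _ = M ^ 2 := one_mul _
        _ = (Fintype.card 𝒜 : ℝ) * M ^ 2 := by
            rw [Finset.sum_const, Finset.card_univ, nsmul_eq_mul]
  have hGnonneg : ∀ x, 0 ≤ ∑ a : 𝒜, (μp (x, a) - μp (x, astar x)) * f (x, a) := fun x =>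
    Finset.sum_nonneg fun a _ =>
      mul_nonneg (sub_nonneg.mpr (hopt x a)) (hFbd f hfF (x, a)).1
  -- main estimate for every u > 0
  have hmain : ∀ u : ℝ, 0 < u →
      (∫ x, ∑ a : 𝒜, (f (x, a) - f1 (x, a)) ^ 2 * V2 (x, a) ∂μX)
        ≤ 2 * M ^ 2 * ((κ * u) ^ ν +
          (∫ x, ∑ a : 𝒜, (μp (x, a) - μp (x, astar x)) * f (x, a) ∂μX) / (M * u)) := by
    intro u hu
    have hMu : 0 < M * u := mul_pos hM hu
    set A := {x | ∃ a, a ≠ astar x ∧ μp (x, a) - μp (x, astar x) ≤ M * u} with hAdef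
    have hA'meas : MeasurableSet (toMeasurable μX A) := measurableSet_toMeasurable μX A
    have hptwise : ∀ᵐ x ∂μX, (∑ a : 𝒜, (f (x, a) - f1 (x, a)) ^ 2 * V2 (x, a))
        ≤ 2 * M ^ 2 * ((toMeasurable μX A).indicator (fun _ => (1 : ℝ)) x
          + (∑ a : 𝒜, (μp (x, a) - μp (x, astar x)) * f (x, a)) / (M * u)) := by
      filter_upwards [hgood] with x hx
      obtain ⟨hgap, hf1a, hf1z⟩ := hx
      have hSdef : ∑ a ∈ Finset.univ.erase (astar x), f (x, a) = 1 - f (x, astar x) := by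
        have hs := hFsum f hfF x
        rw [← Finset.add_sum_erase Finset.univ _ (Finset.mem_univ (astar x))] at hs
        linarith
      have hS0 : 0 ≤ 1 - f (x, astar x) := by linarith [(hf01 (x, astar x)).2]
      have hS1 : 1 - f (x, astar x) ≤ 1 := by linarith [(hf01 (x, astar x)).1]
      have hkey : ∑ a : 𝒜, (f (x, a) - f1 (x, a)) ^ 2 * V2 (x, a)
          ≤ 2 * M ^ 2 * (1 - f (x, astar x)) := by
        have h1 : ∑ a : 𝒜, (f (x, a) - f1 (x, a)) ^ 2 * V2 (x, a)
            ≤ ∑ a : 𝒜, (f (x, a) - f1 (x, a)) ^ 2 * M ^ 2 :=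
          Finset.sum_le_sum fun a _ => mul_le_mul_of_nonneg_left (hV2le (x, a)) (sq_nonneg _)
        have h2 : ∑ a : 𝒜, (f (x, a) - f1 (x, a)) ^ 2
            = (f (x, astar x) - 1) ^ 2 + ∑ a ∈ Finset.univ.erase (astar x), (f (x, a)) ^ 2 := by
          rw [← Finset.add_sum_erase Finset.univ _ (Finset.mem_univ (astar x)), hf1a]
          congr 1
          refine Finset.sum_congr rfl fun a ha => ?_
          rw [hf1z a (Finset.ne_of_mem_erase ha), sub_zero]
        have h3 : (f (x, astar x) - 1) ^ 2 ≤ 1 - f (x, astar x) := by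
          have heq : (f (x, astar x) - 1) ^ 2 = (1 - f (x, astar x)) ^ 2 := by ring
          rw [heq]
          exact pow_le_of_le_one hS0 hS1 two_ne_zero
        have h4 : ∑ a ∈ Finset.univ.erase (astar x), (f (x, a)) ^ 2
            ≤ ∑ a ∈ Finset.univ.erase (astar x), f (x, a) :=
          Finset.sum_le_sum fun a _ =>
            pow_le_of_le_one (hf01 _).1 (hf01 _).2 two_ne_zero
        have h5 : ∑ a : 𝒜, (f (x, a) - f1 (x, a)) ^ 2 ≤ 2 * (1 - f (x, astar x)) := by
          rw [h2]
          rw [hSdef] at h4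
          linarith
        calc ∑ a : 𝒜, (f (x, a) - f1 (x, a)) ^ 2 * V2 (x, a)
            ≤ ∑ a : 𝒜, (f (x, a) - f1 (x, a)) ^ 2 * M ^ 2 := h1
          _ = (∑ a : 𝒜, (f (x, a) - f1 (x, a)) ^ 2) * M ^ 2 := by rw [Finset.sum_mul]
          _ ≤ (2 * (1 - f (x, astar x))) * M ^ 2 :=
              mul_le_mul_of_nonneg_right h5 (sq_nonneg M)
          _ = 2 * M ^ 2 * (1 - f (x, astar x)) := by ring
      by_cases hxA : x ∈ toMeasurable μX A
      · rw [Set.indicator_of_mem hxA]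
        have hGd : 0 ≤ (∑ a : 𝒜, (μp (x, a) - μp (x, astar x)) * f (x, a)) / (M * u) :=
          div_nonneg (hGnonneg x) hMu.le
        have hstep : 2 * M ^ 2 * (1 - f (x, astar x)) ≤ 2 * M ^ 2 * 1 :=
          mul_le_mul_of_nonneg_left hS1 (by positivity)
        refine hkey.trans (hstep.trans ?_)
        have : (1 : ℝ) ≤ 1 + (∑ a : 𝒜, (μp (x, a) - μp (x, astar x)) * f (x, a)) / (M * u) := by
          linarith
        exact mul_le_mul_of_nonneg_left this (by positivity)
      · rw [Set.indicator_of_notMem hxA]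
        have hxA2 : x ∉ A := fun h => hxA (subset_toMeasurable _ _ h)
        have hlt : ∀ a, a ≠ astar x → M * u < μp (x, a) - μp (x, astar x) := by
          intro a ha
          by_contra h
          exact hxA2 ⟨a, ha, not_lt.mp h⟩
        have hGS : M * u * (1 - f (x, astar x))
            ≤ ∑ a : 𝒜, (μp (x, a) - μp (x, astar x)) * f (x, a) := by
          calc M * u * (1 - f (x, astar x))
              = ∑ a ∈ Finset.univ.erase (astar x), M * u * f (x, a) := by
                rw [← Finset.mul_sum, hSdef]
            _ ≤ ∑ a ∈ Finset.univ.erase (astar x), (μp (x, a) - μp (x, astar x)) * f (x, a) :=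
                Finset.sum_le_sum fun a ha => mul_le_mul_of_nonneg_right
                  (le_of_lt (hlt a (Finset.ne_of_mem_erase ha))) (hFbd f hfF (x, a)).1
            _ ≤ ∑ a : 𝒜, (μp (x, a) - μp (x, astar x)) * f (x, a) :=
                Finset.sum_le_sum_of_subset_of_nonneg (Finset.erase_subset _ _)
                  (fun a _ _ => mul_nonneg (sub_nonneg.mpr (hopt x a)) (hFbd f hfF (x, a)).1)
        have hfr : 1 - f (x, astar x)
            ≤ (∑ a : 𝒜, (μp (x, a) - μp (x, astar x)) * f (x, a)) / (M * u) :=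
          (le_div_iff₀ hMu).mpr (by linarith)
        refine hkey.trans ?_
        rw [zero_add]
        exact mul_le_mul_of_nonneg_left hfr (by positivity)
    have hRHSint : Integrable (fun x => 2 * M ^ 2 *
        ((toMeasurable μX A).indicator (fun _ => (1 : ℝ)) x
          + (∑ a : 𝒜, (μp (x, a) - μp (x, astar x)) * f (x, a)) / (M * u))) μX := by
      refine Integrable.const_mul ?_ _
      exact (((integrable_const (1 : ℝ)).indicator hA'meas).add
        ((hsum_int f hfF).div_const _))
    have hle := integral_mono_ae hIint hRHSint hptwise
    have hcomp : (∫ x, 2 * M ^ 2 * ((toMeasurable μX A).indicator (fun _ => (1 : ℝ)) x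
          + (∑ a : 𝒜, (μp (x, a) - μp (x, astar x)) * f (x, a)) / (M * u)) ∂μX)
        = 2 * M ^ 2 * ((μX A).toReal
          + (∫ x, ∑ a : 𝒜, (μp (x, a) - μp (x, astar x)) * f (x, a) ∂μX) / (M * u)) := by
      rw [integral_const_mul]
      congr 1
      rw [integral_add ((integrable_const (1 : ℝ)).indicator hA'meas)
        ((hsum_int f hfF).div_const _)]
      congr 1
      · rw [integral_indicator_const (1 : ℝ) hA'meas, measureReal_def, measure_toMeasurable]
        simp
      · exact integral_div _ _
    rw [hcomp] at hle
    refine hle.trans ?_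
    have htR : (μX A).toReal ≤ (κ * u) ^ ν :=
      ENNReal.toReal_le_of_le_ofReal (Real.rpow_nonneg (by positivity) ν)
        (hmargin u hu.le)
    exact mul_le_mul_of_nonneg_left (add_le_add htR le_rfl) (by positivity)
  rw [hVar]
  have hΔG : (∫ x, ∑ a : 𝒜, (μp (x, a) - μp (x, astar x)) * f (x, a) ∂μX)
      = (∫ o : 𝒳 × 𝒜 × ℝ, o.2.2 * f (o.1, o.2.1) ∂Pstar)
        - ∫ o : 𝒳 × 𝒜 × ℝ, o.2.2 * f1 (o.1, o.2.1) ∂Pstar := by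
    rw [hreal]
    exact (hexcess f hfF).symm
  have hD0 : 0 ≤ ∫ x, ∑ a : 𝒜, (μp (x, a) - μp (x, astar x)) * f (x, a) ∂μX :=
    integral_nonneg hGnonneg
  have hβpos : 0 < ν / (2 * (ν + 1)) := by positivity
  rcases eq_or_lt_of_le hD0 with hzero | hpos
  · -- zero excess-risk case
    have hRR : (∫ o : 𝒳 × 𝒜 × ℝ, o.2.2 * f (o.1, o.2.1) ∂Pstar)
        - (∫ o : 𝒳 × 𝒜 × ℝ, o.2.2 * f1 (o.1, o.2.1) ∂Pstar) = 0 := by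
      rw [← hΔG]; exact hzero.symm
    rw [hRR, zero_div, Real.zero_rpow (ne_of_gt hβpos), mul_zero]
    have hI0 : (∫ x, ∑ a : 𝒜, (f (x, a) - f1 (x, a)) ^ 2 * V2 (x, a) ∂μX) ≤ 0 := by
      by_contra hcon
      push_neg at hcon
      set I := ∫ x, ∑ a : 𝒜, (f (x, a) - f1 (x, a)) ^ 2 * V2 (x, a) ∂μX with hIdef
      have hc : (0 : ℝ) < I / 2 / (2 * M ^ 2) := by positivity
      set u : ℝ := (I / 2 / (2 * M ^ 2)) ^ (ν⁻¹) / κ with hudef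
      have hu : 0 < u := div_pos (Real.rpow_pos_of_pos hc _) hκ
      have h := hmain u hu
      rw [← hzero, zero_div, add_zero] at h
      have hκu : κ * u = (I / 2 / (2 * M ^ 2)) ^ (ν⁻¹) := by rw [hudef]; field_simp
      rw [hκu, Real.rpow_inv_rpow hc.le (ne_of_gt hν)] at h
      have heq : 2 * M ^ 2 * (I / 2 / (2 * M ^ 2)) = I / 2 := by
        field_simp
      rw [heq] at h
      linarith
    rw [Real.sqrt_eq_zero'.mpr hI0]
  · -- positive excess-risk case
    set D := ∫ x, ∑ a : 𝒜, (μp (x, a) - μp (x, astar x)) * f (x, a) ∂μX with hDdef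
    set t : ℝ := ((∫ o : 𝒳 × 𝒜 × ℝ, o.2.2 * f (o.1, o.2.1) ∂Pstar)
        - ∫ o : 𝒳 × 𝒜 × ℝ, o.2.2 * f1 (o.1, o.2.1) ∂Pstar) / M with htdef
    have ht : 0 < t := by
      rw [htdef, ← hΔG]
      exact div_pos hpos hM
    have hDt : D = M * t := by
      rw [htdef, ← hΔG]
      field_simp
    have hκt : 0 < κ * t := mul_pos hκ ht
    set u : ℝ := (κ * t) ^ ((ν + 1)⁻¹) / κ with hudef
    have hu : 0 < u := div_pos (Real.rpow_pos_of_pos hκt _) hκ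
    have hκu : κ * u = (κ * t) ^ ((ν + 1)⁻¹) := by rw [hudef]; field_simp
    have h1 : (κ * u) ^ ν = (κ * t) ^ (ν / (ν + 1)) := by
      rw [hκu, ← Real.rpow_mul hκt.le, inv_mul_eq_div]
    have h2 : D / (M * u) = (κ * t) ^ (ν / (ν + 1)) := by
      rw [hDt, hudef]
      have hrne : ((κ * t) ^ ((ν + 1)⁻¹) : ℝ) ≠ 0 := (Real.rpow_pos_of_pos hκt _).ne'
      rw [show M * t / (M * ((κ * t) ^ ((ν + 1)⁻¹) / κ))
          = κ * t / (κ * t) ^ ((ν + 1)⁻¹) by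
        field_simp]
      rw [show κ * t / (κ * t) ^ ((ν + 1)⁻¹) = (κ * t) ^ ((1 : ℝ) - (ν + 1)⁻¹) by
        rw [Real.rpow_sub hκt, Real.rpow_one]]
      congr 1
      field_simp
      ring
    have hIle : (∫ x, ∑ a : 𝒜, (f (x, a) - f1 (x, a)) ^ 2 * V2 (x, a) ∂μX)
        ≤ 4 * M ^ 2 * (κ * t) ^ (ν / (ν + 1)) := by
      have h := hmain u hu
      rw [h1, h2] at h
      nlinarith [Real.rpow_nonneg hκt.le (ν / (ν + 1)), sq_nonneg M]
    refine (Real.sqrt_le_sqrt hIle).trans ?_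
    have hfin : Real.sqrt (4 * M ^ 2 * (κ * t) ^ (ν / (ν + 1)))
        = 2 * M * (κ * t) ^ (ν / (2 * (ν + 1))) := by
      rw [show 4 * M ^ 2 * (κ * t) ^ (ν / (ν + 1))
          = (2 * M) ^ 2 * (κ * t) ^ (ν / (ν + 1)) by ring]
      rw [Real.sqrt_mul (by positivity) _]
      rw [Real.sqrt_sq (by positivity : (0 : ℝ) ≤ 2 * M)]
      rw [Real.sqrt_eq_rpow, ← Real.rpow_mul hκt.le]
      rw [show ν / (ν + 1) * (1 / 2) = ν / (2 * (ν + 1)) by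
        rw [div_mul_div_comm, mul_one, mul_comm (ν + 1) 2]]
    rw [hfin]
    exact le_of_eq (by rw [Real.mul_rpow hκ.le ht.le]; ring)
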